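/- If i ≥ 1 is odd then the polynomial B_i(x) has degree (2^{ik} - 2^k)/(2^{2k} - 1), and if i ≥ 2 is even then B_i(x) has degree (2^{ik} - 2^{2k})/(2^{2k} - 1). -/

import Mathlib

open Polynomial

/-- The polynomials `B_i` from the paper, as actual polynomials:
`B_1 = B_2 = 1`, `B_{i+2} = B_{i+1} + X^{2^{ik}} B_i`. -/
noncomputable def Bpoly (F : Type*) [Field F] (k : ℕ) : ℕ → Polynomial F
  | 0 => 1
  | 1 => 1
  | 2 => 1
  | i + 3 => Bpoly F k (i + 2) + X ^ (2 ^ ((i + 1) * k)) * Bpoly F k (i + 1)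

/-- The degree sequence of `Bpoly`. -/
def Dseq (k : ℕ) : ℕ → ℕ
  | 0 => 0
  | 1 => 0
  | 2 => 0
  | i + 3 => 2 ^ ((i + 1) * k) + Dseq k (i + 1)

lemma Dseq_lt (k : ℕ) (hk : 1 ≤ k) : ∀ i, Dseq k (i + 1) < 2 ^ (i * k) := by
  intro i
  induction i using Nat.strong_induction_on with
  | _ i ih =>
    match i with
    | 0 => simp [Dseq]
    | 1 =>
      simp [Dseq]
    | n + 2 =>
      have h1 := ih n (by omega)
      show 2 ^ ((n + 1) * k) + Dseq k (n + 1) < 2 ^ ((n + 2) * k)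
      have h2 : 2 ^ (n * k) ≤ 2 ^ ((n + 1) * k) :=
        Nat.pow_le_pow_right (by norm_num) (by nlinarith)
      have h3 : (n + 1) * k + 1 ≤ (n + 2) * k := by nlinarith
      have h4 : 2 ^ ((n + 1) * k + 1) ≤ 2 ^ ((n + 2) * k) :=
        Nat.pow_le_pow_right (by norm_num) h3
      have : 2 ^ ((n + 1) * k) + Dseq k (n + 1) < 2 ^ ((n + 1) * k) + 2 ^ ((n + 1) * k) := by
        omega
      calc 2 ^ ((n + 1) * k) + Dseq k (n + 1)
          < 2 ^ ((n + 1) * k) + 2 ^ ((n + 1) * k) := this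
        _ = 2 ^ ((n + 1) * k + 1) := by ring
        _ ≤ 2 ^ ((n + 2) * k) := h4

lemma Bpoly_deg (F : Type*) [Field F] (k : ℕ) (hk : 1 ≤ k) :
    ∀ i, Bpoly F k (i + 1) ≠ 0 ∧ (Bpoly F k (i + 1)).natDegree = Dseq k (i + 1) := by
  intro i
  induction i using Nat.strong_induction_on with
  | _ i ih =>
    match i with
    | 0 => simp [Bpoly, Dseq]
    | 1 => simp [Bpoly, Dseq]
    | n + 2 =>
      obtain ⟨hne1, hd1⟩ := ih n (by omega)
      obtain ⟨hne2, hd2⟩ := ih (n + 1) (by omega)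
      have hrec : Bpoly F k (n + 3)
          = Bpoly F k (n + 2) + X ^ (2 ^ ((n + 1) * k)) * Bpoly F k (n + 1) := by
        rw [Bpoly]
      have hXpow : (X : Polynomial F) ^ (2 ^ ((n + 1) * k)) ≠ 0 := pow_ne_zero _ X_ne_zero
      have hmul : ((X : Polynomial F) ^ (2 ^ ((n + 1) * k)) * Bpoly F k (n + 1)).natDegree
          = 2 ^ ((n + 1) * k) + Dseq k (n + 1) := by
        rw [natDegree_mul hXpow hne1, natDegree_X_pow, hd1]
      have hlt : (Bpoly F k (n + 2)).natDegree
          < ((X : Polynomial F) ^ (2 ^ ((n + 1) * k)) * Bpoly F k (n + 1)).natDegree := by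
        rw [hmul, hd2]
        have := Dseq_lt k hk (n + 1)
        omega
      have hdeg : (Bpoly F k (n + 3)).natDegree = 2 ^ ((n + 1) * k) + Dseq k (n + 1) := by
        rw [hrec, natDegree_add_eq_right_of_natDegree_lt hlt, hmul]
      constructor
      · intro h
        rw [h] at hdeg
        have : 0 < 2 ^ ((n + 1) * k) := Nat.pow_pos (by norm_num)
        simp at hdeg
        omega
      · rw [hdeg]; rfl

lemma Dseq_odd (k : ℕ) :
    ∀ m, Dseq k (2 * m + 1) * (2 ^ (2 * k) - 1) + 2 ^ k = 2 ^ ((2 * m + 1) * k) := by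
  intro m
  induction m with
  | zero => simp [Dseq]
  | succ m ih =>
    have hrec : Dseq k (2 * (m + 1) + 1) = 2 ^ ((2 * m + 1) * k) + Dseq k (2 * m + 1) := by
      have : 2 * (m + 1) + 1 = (2 * m) + 3 := by ring
      rw [this]
      show Dseq k (2 * m + 3) = _
      rw [Dseq]
    set a := 2 ^ ((2 * m + 1) * k) with ha
    set q := 2 ^ (2 * k) with hq
    have hq1 : 1 ≤ q := Nat.one_le_two_pow
    have htarget : 2 ^ ((2 * (m + 1) + 1) * k) = a * q := by
      rw [ha, hq, ← pow_add]
      congr 1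
      ring
    rw [hrec, htarget]
    calc (a + Dseq k (2 * m + 1)) * (q - 1) + 2 ^ k
        = a * (q - 1) + (Dseq k (2 * m + 1) * (q - 1) + 2 ^ k) := by ring
      _ = a * (q - 1) + a := by rw [ih]
      _ = a * ((q - 1) + 1) := by ring
      _ = a * q := by rw [Nat.sub_add_cancel hq1]

lemma Dseq_even (k : ℕ) :
    ∀ m, Dseq k (2 * m + 2) * (2 ^ (2 * k) - 1) + 2 ^ (2 * k) = 2 ^ ((2 * m + 2) * k) := by
  intro m
  induction m with
  | zero => simp [Dseq]
  | succ m ih =>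
    have hrec : Dseq k (2 * (m + 1) + 2) = 2 ^ ((2 * m + 2) * k) + Dseq k (2 * m + 2) := by
      have : 2 * (m + 1) + 2 = (2 * m + 1) + 3 := by ring
      rw [this]
      show Dseq k ((2 * m + 1) + 3) = _
      rw [Dseq]
    set a := 2 ^ ((2 * m + 2) * k) with ha
    set q := 2 ^ (2 * k) with hq
    have hq1 : 1 ≤ q := Nat.one_le_two_pow
    have htarget : 2 ^ ((2 * (m + 1) + 2) * k) = a * q := by
      rw [ha, hq, ← pow_add]
      congr 1
      ring
    rw [hrec, htarget]
    calc (a + Dseq k (2 * m + 2)) * (q - 1) + 2 ^ (2 * k)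
        = a * (q - 1) + (Dseq k (2 * m + 2) * (q - 1) + 2 ^ (2 * k)) := by ring
      _ = a * (q - 1) + a := by rw [ih]
      _ = a * ((q - 1) + 1) := by ring
      _ = a * q := by rw [Nat.sub_add_cancel hq1]

theorem stmt3 (k : ℕ) (hk : 1 ≤ k)
    (F : Type*) [Field F] [CharP F 2] :
    (∀ i : ℕ, 1 ≤ i → Odd i →
        (Bpoly F k i).natDegree = (2 ^ (i * k) - 2 ^ k) / (2 ^ (2 * k) - 1)) ∧
      (∀ i : ℕ, 2 ≤ i → Even i →
        (Bpoly F k i).natDegree = (2 ^ (i * k) - 2 ^ (2 * k)) / (2 ^ (2 * k) - 1)) := by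
  have hqpos : 0 < 2 ^ (2 * k) - 1 := by
    have : (4 : ℕ) ≤ 2 ^ (2 * k) := by
      calc (4 : ℕ) = 2 ^ 2 := by norm_num
        _ ≤ 2 ^ (2 * k) := Nat.pow_le_pow_right (by norm_num) (by omega)
    omega
  constructor
  · intro i hi hodd
    obtain ⟨m, hm⟩ := hodd
    subst hm
    have hdeg : (Bpoly F k (2 * m + 1)).natDegree = Dseq k (2 * m + 1) :=
      (Bpoly_deg F k hk (2 * m)).2
    have hform := Dseq_odd k m
    have hsub : 2 ^ ((2 * m + 1) * k) - 2 ^ k = Dseq k (2 * m + 1) * (2 ^ (2 * k) - 1) := by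
      omega
    rw [hdeg, hsub, Nat.mul_div_cancel _ hqpos]
  · intro i hi heven
    obtain ⟨m, hm⟩ := heven
    have hm' : i = 2 * (m - 1) + 2 := by omega
    subst hm'
    have hdeg : (Bpoly F k (2 * (m - 1) + 2)).natDegree = Dseq k (2 * (m - 1) + 2) :=
      (Bpoly_deg F k hk (2 * (m - 1) + 1)).2
    have hform := Dseq_even k (m - 1)
    have hsub : 2 ^ ((2 * (m - 1) + 2) * k) - 2 ^ (2 * k)
        = Dseq k (2 * (m - 1) + 2) * (2 ^ (2 * k) - 1) := by
      omega
    rw [hdeg, hsub, Nat.mul_div_cancel _ hqpos]
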